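/- Fix ε ≥ 0, δ ≥ 0, and any finite α ≥ 1. Let M be any randomized mechanism that takes a MobileVaccClinic instance with outliers on the Euclidean line ℝ (with public locations C ⊆ ℝ, budget k, and requirement ρ, and private people with their travel sets) and outputs a random set F ⊆ C with |F| ≤ k, and suppose M is (ε, δ)-differentially private with respect to instances differing in exactly one person together with their travel set. If there is p such that on every instance M outputs a set F whose radius is at most α · R* with probability at least p (where R* is the optimal radius of the instance), then p ≤ (e^ε + δ)/(1 + e^ε). In particular, when δ < 1, no (ε, δ)-differentially private algorithm — efficient or not — achieves any finite multiplicative approximation for MobileVaccClinic with outliers with probability tending to 1, even on the Euclidean line. -/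

import Mathlib

open scoped ENNReal

/-!
STATEMENT 10: Fix `ε, δ ≥ 0` and a finite approximation factor `α ≥ 1`. Let `M`
be any randomized mechanism taking a MobileVaccClinic instance with outliers on
the Euclidean line (public locations `C ⊆ ℝ`, budget `k`, requirement `ρ`;
private population given as a multiset of travel sets) to a distribution over
facility sets `F ⊆ ℝ`, and suppose `M` is `(ε, δ)`-differentially private with
respect to populations differing in exactly one person (with their travel set).
If on every instance `M` outputs, with probability at least `p`, a set `F ⊆ C`
with `|F| ≤ k` whose radius is at most `α · R*` (where `R*` is the optimal
radius of the instance), then `p ≤ (e^ε + δ) / (1 + e^ε)`. Hence no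
`(ε, δ)`-differentially private algorithm achieves any finite multiplicative
approximation with probability tending to `1`, even on the Euclidean line.
-/

attribute [local instance] Classical.propDecidable

noncomputable section

/-- `d(A, B) = min_{j ∈ A, j' ∈ B} d(j, j')` for finite (nonempty) sets. -/
def setDist {C : Type*} [MetricSpace C] (A B : Finset C) : ℝ :=
  sInf {r : ℝ | ∃ j ∈ A, ∃ j' ∈ B, r = dist j j'}

/-- Neighboring populations: they differ in exactly one person together with
their travel set. -/
def NeighborP (P P' : Multiset (Finset ℝ)) : Prop :=
  ∃ T : Finset ℝ, P' = T ::ₘ P ∨ P = T ::ₘ P'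

/-- The radius of a facility set `F` on population `P` with requirement `ρ`:
the smallest `R` such that at least `⌊ρ|P|⌋` people `p` have `d(S_p, F) ≤ R`. -/
def mvcRadius (ρ : ℝ) (P : Multiset (Finset ℝ)) (F : Finset ℝ) : ℝ :=
  sInf {R : ℝ |
    ⌊ρ * (Multiset.card P : ℝ)⌋₊ ≤ Multiset.card (P.filter fun T => setDist T F ≤ R)}

/-- The optimal radius `R*`: the minimum radius over all nonempty `F ⊆ C` with
`|F| ≤ k`. -/
def mvcRstar (C : Finset ℝ) (k : ℕ) (ρ : ℝ) (P : Multiset (Finset ℝ)) : ℝ :=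
  sInf {R : ℝ | ∃ F : Finset ℝ, F.Nonempty ∧ F ⊆ C ∧ F.card ≤ k ∧
    ⌊ρ * (Multiset.card P : ℝ)⌋₊ ≤ Multiset.card (P.filter fun T => setDist T F ≤ R)}

/- ### Auxiliary lemmas -/

lemma setDist_sing_sing (a c : ℝ) : setDist {a} {c} = dist a c := by
  have h : {r : ℝ | ∃ j ∈ ({a} : Finset ℝ), ∃ j' ∈ ({c} : Finset ℝ), r = dist j j'}
      = {dist a c} := by
    ext r; simp [eq_comm]
  rw [setDist, h, csInf_singleton]

lemma setDist_pair_sing (a b c : ℝ) :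
    setDist {a, b} {c} = min (dist a c) (dist b c) := by
  have h : {r : ℝ | ∃ j ∈ ({a, b} : Finset ℝ), ∃ j' ∈ ({c} : Finset ℝ), r = dist j j'}
      = {dist a c, dist b c} := by
    ext r
    constructor
    · rintro ⟨j, hj, j', hj', rfl⟩
      rw [Finset.mem_singleton] at hj'
      subst hj'
      rcases Finset.mem_insert.mp hj with rfl | hj
      · exact Set.mem_insert _ _
      · rw [Finset.mem_singleton] at hj
        subst hj
        exact Set.mem_insert_of_mem _ rfl
    · rintro (rfl | rfl)
      · exact ⟨a, by simp, c, by simp⟩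
      · exact ⟨b, by simp, c, by simp⟩
  rw [setDist, h, csInf_pair]

lemma setDist_nonneg' {A B : Finset ℝ} (hA : A.Nonempty) (hB : B.Nonempty) :
    0 ≤ setDist A B := by
  obtain ⟨a, ha⟩ := hA
  obtain ⟨b, hb⟩ := hB
  refine le_csInf ⟨dist a b, a, ha, b, hb, rfl⟩ ?_
  rintro r ⟨j, _, j', _, rfl⟩
  exact dist_nonneg

/-- For a population of one person, the coverage condition in `mvcRadius` and
`mvcRstar` with `ρ = 1` says exactly `setDist S F ≤ R`. -/
lemma cond_single (S F : Finset ℝ) (R : ℝ) :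
    (⌊(1:ℝ) * (Multiset.card ({S} : Multiset (Finset ℝ)) : ℝ)⌋₊ ≤
      Multiset.card (Multiset.filter (fun T => setDist T F ≤ R) ({S} : Multiset (Finset ℝ))))
    ↔ setDist S F ≤ R := by
  by_cases h : setDist S F ≤ R
  · simp [Multiset.filter_singleton, h]
  · simp [Multiset.filter_singleton, h]

/-- For a population of two people, the coverage condition with `ρ = 1` says
both are covered. -/
lemma cond_two (S1 S2 F : Finset ℝ) (R : ℝ) :
    (⌊(1:ℝ) * (Multiset.card (S2 ::ₘ ({S1} : Multiset (Finset ℝ))) : ℝ)⌋₊ ≤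
      Multiset.card (Multiset.filter (fun T => setDist T F ≤ R)
        (S2 ::ₘ ({S1} : Multiset (Finset ℝ)))))
    ↔ max (setDist S1 F) (setDist S2 F) ≤ R := by
  have hcard : (⌊(1:ℝ) * (Multiset.card (S2 ::ₘ ({S1} : Multiset (Finset ℝ))) : ℝ)⌋₊) = 2 := by
    norm_num
  rw [hcard, max_le_iff]
  by_cases h1 : setDist S1 F ≤ R <;> by_cases h2 : setDist S2 F ≤ R <;>
    simp [Multiset.filter_cons, Multiset.filter_singleton, h1, h2]

lemma radius_single (S F : Finset ℝ) :
    mvcRadius 1 ({S} : Multiset (Finset ℝ)) F = setDist S F := by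
  have h : {R : ℝ | ⌊(1:ℝ) * (Multiset.card ({S} : Multiset (Finset ℝ)) : ℝ)⌋₊ ≤
        Multiset.card (Multiset.filter (fun T => setDist T F ≤ R)
          ({S} : Multiset (Finset ℝ)))} = Set.Ici (setDist S F) := by
    ext R
    simpa [Set.mem_Ici] using cond_single S F R
  rw [mvcRadius, h, csInf_Ici]

lemma radius_two (S1 S2 F : Finset ℝ) :
    mvcRadius 1 (S2 ::ₘ ({S1} : Multiset (Finset ℝ))) F
      = max (setDist S1 F) (setDist S2 F) := by
  have h : {R : ℝ | ⌊(1:ℝ) * (Multiset.card (S2 ::ₘ ({S1} : Multiset (Finset ℝ))) : ℝ)⌋₊ ≤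
        Multiset.card (Multiset.filter (fun T => setDist T F ≤ R)
          (S2 ::ₘ ({S1} : Multiset (Finset ℝ))))} = Set.Ici (max (setDist S1 F) (setDist S2 F)) := by
    ext R
    simpa [Set.mem_Ici] using cond_two S1 S2 F R
  rw [mvcRadius, h, csInf_Ici]

/-- A nonempty subset of `{x0, x1, x2}` of size at most 1 is one of the three
singletons. -/
lemma F_cases {x0 x1 x2 : ℝ} {F : Finset ℝ} (hsub : F ⊆ {x0, x1, x2})
    (hne : F.Nonempty) (hc : F.card ≤ 1) :
    F = {x0} ∨ F = {x1} ∨ F = {x2} := by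
  obtain ⟨a, ha⟩ := hne
  have hFa : F = {a} := by
    apply Finset.eq_singleton_iff_unique_mem.mpr
    exact ⟨ha, fun b hb => Finset.card_le_one.mp hc b hb a ha⟩
  have := hsub ha
  simp only [Finset.mem_insert, Finset.mem_singleton] at this
  rcases this with rfl | rfl | rfl
  · exact Or.inl hFa
  · exact Or.inr (Or.inl hFa)
  · exact Or.inr (Or.inr hFa)

lemma pmf_add_compl {A : Type*} (q : PMF A) (s : Set A) :
    q.toOuterMeasure s + q.toOuterMeasure sᶜ = 1 := by
  rw [PMF.toOuterMeasure_apply, PMF.toOuterMeasure_apply, ← ENNReal.tsum_add, ← q.tsum_coe]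
  congr 1
  ext x
  by_cases hx : x ∈ s <;> simp [Set.indicator, hx]

lemma pmf_le_one {A : Type*} (q : PMF A) (s : Set A) : q.toOuterMeasure s ≤ 1 := by
  have := pmf_add_compl q s
  calc q.toOuterMeasure s ≤ q.toOuterMeasure s + q.toOuterMeasure sᶜ := le_self_add
    _ = 1 := this

theorem stmt10 (ε δ : ℝ) (hε : 0 ≤ ε) (hδ : 0 ≤ δ) (α : ℝ) (hα : 1 ≤ α)
    (M : Finset ℝ → ℕ → ℝ → Multiset (Finset ℝ) → PMF (Finset ℝ))
    (hDP : ∀ (C : Finset ℝ) (k : ℕ) (ρ : ℝ) (P P' : Multiset (Finset ℝ)),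
      NeighborP P P' → ∀ E : Set (Finset ℝ),
        (M C k ρ P).toOuterMeasure E ≤
          ENNReal.ofReal (Real.exp ε) * (M C k ρ P').toOuterMeasure E +
            ENNReal.ofReal δ)
    (p : ℝ≥0∞)
    (hutil : ∀ (C : Finset ℝ) (k : ℕ) (ρ : ℝ) (P : Multiset (Finset ℝ)),
      C.Nonempty → 1 ≤ k → 0 < ρ → ρ ≤ 1 →
      p ≤ (M C k ρ P).toOuterMeasure
        {F : Finset ℝ | F.Nonempty ∧ F ⊆ C ∧ F.card ≤ k ∧
          mvcRadius ρ P F ≤ α * mvcRstar C k ρ P}) :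
    p ≤ (ENNReal.ofReal (Real.exp ε) + ENNReal.ofReal δ) /
      (1 + ENNReal.ofReal (Real.exp ε)) := by
  have hα0 : (0:ℝ) < α := lt_of_lt_of_le one_pos hα
  -- parameters of the hard instance
  set θ : ℝ := 1 / (2 * α) with hθdef
  have hθ0 : 0 < θ := by positivity
  have hθhalf : θ ≤ 1 / 2 := by
    rw [hθdef]
    rw [div_le_div_iff₀ (by positivity) (by norm_num)]
    linarith
  set u : ℝ := 1 - 2 * θ with hudef
  set t : ℝ := 1 - θ with htdef
  have hu0 : 0 ≤ u := by simp [hudef]; linarith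
  have hut : u ≤ t := by simp [hudef, htdef]; linarith
  have ht1 : t ≤ 1 := by simp [htdef]; linarith
  set C : Finset ℝ := {0, t, 1} with hCdef
  set S1 : Finset ℝ := {0, u} with hS1def
  set T : Finset ℝ := {1} with hTdef
  set P : Multiset (Finset ℝ) := {S1} with hPdef
  set P' : Multiset (Finset ℝ) := T ::ₘ P with hP'def
  have hS1ne : S1.Nonempty := ⟨0, by simp [hS1def]⟩
  -- distances from S1 = {0, u} to the three candidate facilities
  have d10 : setDist S1 {0} = 0 := by
    rw [hS1def, setDist_pair_sing]
    rw [Real.dist_eq, Real.dist_eq]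
    rw [abs_of_nonpos (by norm_num), abs_of_nonneg (by linarith)]
    simp
    linarith
  have d1t : setDist S1 {t} = θ := by
    rw [hS1def, setDist_pair_sing]
    rw [Real.dist_eq, Real.dist_eq]
    rw [abs_of_nonpos (by simp [htdef]; linarith), abs_of_nonpos (by linarith)]
    simp [htdef, hudef]
    rw [min_eq_right (by linarith)]
    ring
  have d11 : setDist S1 {1} = 2 * θ := by
    rw [hS1def, setDist_pair_sing]
    rw [Real.dist_eq, Real.dist_eq]
    rw [abs_of_nonpos (by norm_num), abs_of_nonpos (by simp [hudef]; linarith)]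
    simp [hudef]
    linarith
  -- distances from T = {1} to the three candidate facilities
  have d20 : setDist T {0} = 1 := by
    rw [hTdef, setDist_sing_sing, Real.dist_eq]
    norm_num
  have d2t : setDist T {t} = θ := by
    rw [hTdef, setDist_sing_sing, Real.dist_eq]
    rw [abs_of_nonneg (by simp [htdef]; linarith)]
    simp [htdef]
  have d21 : setDist T {1} = 0 := by
    rw [hTdef, setDist_sing_sing]
    simp
  -- R* of the first instance is 0
  have hRstarP : mvcRstar C 1 1 P = 0 := by
    have h : {R : ℝ | ∃ F : Finset ℝ, F.Nonempty ∧ F ⊆ C ∧ F.card ≤ 1 ∧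
        ⌊(1:ℝ) * (Multiset.card P : ℝ)⌋₊ ≤
          Multiset.card (P.filter fun S => setDist S F ≤ R)} = Set.Ici 0 := by
      ext R
      simp only [Set.mem_setOf_eq, Set.mem_Ici]
      constructor
      · rintro ⟨F, hFne, hFC, hFk, hcond⟩
        rw [hPdef, cond_single] at hcond
        exact le_trans (setDist_nonneg' hS1ne hFne) hcond
      · intro hR
        refine ⟨{0}, ⟨0, by simp⟩, ?_, by simp, ?_⟩
        · intro x hx
          simp only [Finset.mem_singleton] at hx
          simp [hCdef, hx]
        · rw [hPdef, cond_single, d10]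
          exact hR
    rw [mvcRstar, h, csInf_Ici]
  -- R* of the second instance is θ
  have hRstarP' : mvcRstar C 1 1 P' = θ := by
    have h : {R : ℝ | ∃ F : Finset ℝ, F.Nonempty ∧ F ⊆ C ∧ F.card ≤ 1 ∧
        ⌊(1:ℝ) * (Multiset.card P' : ℝ)⌋₊ ≤
          Multiset.card (P'.filter fun S => setDist S F ≤ R)} = Set.Ici θ := by
      ext R
      simp only [Set.mem_setOf_eq, Set.mem_Ici]
      constructor
      · rintro ⟨F, hFne, hFC, hFk, hcond⟩
        rw [hP'def, hPdef, cond_two] at hcond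
        rcases F_cases hFC hFne hFk with rfl | rfl | rfl
        · rw [d10, d20] at hcond
          have : (1:ℝ) ≤ R := le_trans (le_max_right _ _) hcond
          linarith
        · rw [d1t, d2t] at hcond
          exact le_trans (le_max_left _ _) hcond
        · rw [d11, d21] at hcond
          have : 2 * θ ≤ R := le_trans (le_max_left _ _) hcond
          linarith
      · intro hR
        refine ⟨{t}, ⟨t, by simp⟩, ?_, by simp, ?_⟩
        · intro x hx
          simp only [Finset.mem_singleton] at hx
          simp [hCdef, hx]
        · rw [hP'def, hPdef, cond_two, d1t, d2t]
          simpa using hR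
    rw [mvcRstar, h, csInf_Ici]
  -- the two "good" events
  set E : Set (Finset ℝ) := {F : Finset ℝ | F.Nonempty ∧ F ⊆ C ∧ F.card ≤ 1 ∧
      mvcRadius 1 P F ≤ α * mvcRstar C 1 1 P} with hEdef
  set E' : Set (Finset ℝ) := {F : Finset ℝ | F.Nonempty ∧ F ⊆ C ∧ F.card ≤ 1 ∧
      mvcRadius 1 P' F ≤ α * mvcRstar C 1 1 P'} with hE'def
  -- the good events are disjoint: E ⊆ E'ᶜ
  have hdisj : E ⊆ E'ᶜ := by
    rintro F ⟨hFne, hFC, hFk, hrad⟩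
    rw [hRstarP, mul_zero, hPdef, radius_single] at hrad
    have hF0 : F = {0} := by
      rcases F_cases hFC hFne hFk with rfl | rfl | rfl
      · rfl
      · rw [d1t] at hrad; linarith
      · rw [d11] at hrad; linarith
    rintro ⟨-, -, -, hrad'⟩
    rw [hRstarP', hF0, hP'def, hPdef, radius_two, d10, d20] at hrad'
    have hαθ : α * θ = 1 / 2 := by
      rw [hθdef]; field_simp
    rw [hαθ] at hrad'
    have : (1:ℝ) ≤ 1/2 := le_trans (le_max_right _ _) hrad'
    linarith
  -- neighboring instances
  have hnbr : NeighborP P P' := ⟨T, Or.inl rfl⟩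
  have hCne : C.Nonempty := ⟨0, by simp [hCdef]⟩
  -- utility on both instances
  have hp1 : p ≤ (M C 1 1 P).toOuterMeasure E :=
    hutil C 1 1 P hCne le_rfl one_pos le_rfl
  have hp2 : p ≤ (M C 1 1 P').toOuterMeasure E' :=
    hutil C 1 1 P' hCne le_rfl one_pos le_rfl
  -- DP step
  have hdp : (M C 1 1 P).toOuterMeasure E ≤
      ENNReal.ofReal (Real.exp ε) * (M C 1 1 P').toOuterMeasure E +
        ENNReal.ofReal δ := hDP C 1 1 P P' hnbr E
  -- bound μ_{P'}(E) ≤ 1 - p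
  have hmono : (M C 1 1 P').toOuterMeasure E ≤ (M C 1 1 P').toOuterMeasure E'ᶜ :=
    (M C 1 1 P').toOuterMeasure.mono hdisj
  have hcompl : (M C 1 1 P').toOuterMeasure E'ᶜ = 1 - (M C 1 1 P').toOuterMeasure E' := by
    have hadd := pmf_add_compl (M C 1 1 P') E'
    have hfin : (M C 1 1 P').toOuterMeasure E' ≠ ⊤ :=
      ne_top_of_le_ne_top ENNReal.one_ne_top (pmf_le_one _ _)
    rw [← hadd, add_comm]
    rw [ENNReal.add_sub_cancel_right hfin]
  have hE1 : (M C 1 1 P').toOuterMeasure E ≤ 1 - p := by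
    refine le_trans hmono ?_
    rw [hcompl]
    exact tsub_le_tsub_left hp2 1
  -- combine
  set Eε : ℝ≥0∞ := ENNReal.ofReal (Real.exp ε) with hEεdef
  have hEεtop : Eε ≠ ⊤ := ENNReal.ofReal_ne_top
  have hp_le_one : p ≤ 1 := le_trans hp1 (pmf_le_one _ _)
  have hkey : p ≤ Eε * (1 - p) + ENNReal.ofReal δ := by
    refine le_trans hp1 (le_trans hdp ?_)
    exact add_le_add_left (mul_le_mul_right hE1 _) _
  have hmul : p * (1 + Eε) ≤ Eε + ENNReal.ofReal δ := by
    have h1 : p * (1 + Eε) = p + Eε * p := by ring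
    rw [h1]
    calc p + Eε * p ≤ (Eε * (1 - p) + ENNReal.ofReal δ) + Eε * p :=
          add_le_add_left hkey _
      _ = Eε * ((1 - p) + p) + ENNReal.ofReal δ := by ring
      _ = Eε + ENNReal.ofReal δ := by
          rw [tsub_add_cancel_of_le hp_le_one, mul_one]
  rw [ENNReal.le_div_iff_mul_le
    (Or.inl (ne_of_gt (lt_of_lt_of_le zero_lt_one le_self_add)))
    (Or.inl (by simp [ENNReal.add_ne_top, hEεtop]))]
  calc p * (1 + Eε) ≤ Eε + ENNReal.ofReal δ := hmul
    _ = ENNReal.ofReal (Real.exp ε) + ENNReal.ofReal δ := rfl
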